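/- arXiv:1411.2057 — 5 statements merged into one kernel-verified Lean document; each statement's English description precedes it below -/
import Mathlib

section
/- In a uniformly random permutation of R red and B blue balls arranged in a line, let N_cons(i) be the number of red balls in the maximal run of consecutive red balls containing the i-th red ball. Then for every i, the expectation of N_cons(i) is at most 4R/(B+1) + 2. -/
/-- All arrangements of `R` red and `B` blue balls in a line: colorings of
`Fin (R+B)` with exactly `R` red (`true`) positions. -/
def arrangements (R B : ℕ) : Finset (Fin (R + B) → Bool) :=
  Finset.univ.filter fun c => (Finset.univ.filter fun j => c j = true).card = R

/-- The color at natural-number position `k` (false off the line). -/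
def colAt (R B : ℕ) (c : Fin (R + B) → Bool) (k : ℕ) : Bool :=
  if h : k < R + B then c ⟨k, h⟩ else false

/-- Position (in `0,…,R+B-1`) of the `i`-th red ball (0-indexed). -/
def redPos (R B : ℕ) (c : Fin (R + B) → Bool) (i : ℕ) : ℕ :=
  ((((Finset.univ.filter fun j => c j = true).sort (· ≤ ·)).map Fin.val).getD i 0)

/-- Number of balls in the maximal run of consecutive red balls containing
position `p` (all positions `j` such that every position between `p` and `j`
is red). -/
def runCard (R B : ℕ) (c : Fin (R + B) → Bool) (p : ℕ) : ℕ :=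
  ((Finset.range (R + B)).filter fun j =>
    ∀ k ∈ Finset.Icc (min p j) (max p j), colAt R B c k = true).card

namespace RunAux

open Finset

variable {R B : ℕ}

/-- Number of red positions strictly below `m`. -/
def cnt (R B : ℕ) (c : Fin (R + B) → Bool) (m : ℕ) : ℕ :=
  ((Finset.range m).filter fun k => colAt R B c k = true).card

lemma mem_arr {c : Fin (R + B) → Bool} :
    c ∈ arrangements R B ↔ (Finset.univ.filter fun j => c j = true).card = R := by
  simp [arrangements]

lemma colAt_lt {c : Fin (R + B) → Bool} {k : ℕ} (h : colAt R B c k = true) : k < R + B := by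
  by_contra hk
  simp [colAt, hk] at h

lemma colAt_fin (c : Fin (R + B) → Bool) (j : Fin (R + B)) : colAt R B c j.val = c j := by
  simp [colAt, j.isLt]

lemma cnt_mono (c : Fin (R + B) → Bool) {m m' : ℕ} (h : m ≤ m') :
    cnt R B c m ≤ cnt R B c m' :=
  Finset.card_le_card (Finset.filter_subset_filter _ (Finset.range_subset_range.2 h))

lemma cnt_split (c : Fin (R + B) → Bool) {a b : ℕ} (h : a ≤ b) :
    cnt R B c b = cnt R B c a + ((Finset.Ico a b).filter fun k => colAt R B c k = true).card := by
  unfold cnt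
  rw [range_eq_Ico, ← Finset.Ico_union_Ico_eq_Ico (Nat.zero_le a) h,
    Finset.filter_union, Finset.card_union_of_disjoint
      (Finset.disjoint_filter_filter (Finset.Ico_disjoint_Ico_consecutive 0 a b)), ← range_eq_Ico]

lemma cnt_run (c : Fin (R + B) → Bool) {a b : ℕ} (h : a ≤ b + 1)
    (hrun : ∀ k ∈ Finset.Icc a b, colAt R B c k = true) :
    cnt R B c (b + 1) = cnt R B c a + (b + 1 - a) := by
  rw [cnt_split c h, Finset.filter_true_of_mem, Nat.card_Ico]
  intro k hk
  rw [Finset.mem_Ico] at hk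
  exact hrun k (Finset.mem_Icc.2 ⟨hk.1, by omega⟩)

lemma card_eq_cnt (c : Fin (R + B) → Bool) :
    (Finset.univ.filter fun j => c j = true).card = cnt R B c (R + B) := by
  unfold cnt
  rw [← Finset.card_image_of_injective _ Fin.val_injective]
  congr 1
  ext k
  simp only [Finset.mem_image, Finset.mem_filter, Finset.mem_univ, true_and, Finset.mem_range]
  constructor
  · rintro ⟨j, hj, rfl⟩
    refine ⟨j.isLt, ?_⟩
    simpa [colAt, j.isLt] using hj
  · rintro ⟨hk, hcol⟩
    refine ⟨⟨k, hk⟩, ?_, rfl⟩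
    simpa [colAt, hk] using hcol
lemma cnt_total {c : Fin (R + B) → Bool} (hc : c ∈ arrangements R B) :
    cnt R B c (R + B) = R := by
  rw [← card_eq_cnt, mem_arr.1 hc]

lemma cnt_le {c : Fin (R + B) → Bool} (hc : c ∈ arrangements R B) (m : ℕ) :
    cnt R B c m ≤ R := by
  refine le_trans ?_ (le_of_eq (cnt_total hc))
  apply Finset.card_le_card
  intro k hk
  rw [Finset.mem_filter] at hk ⊢
  exact ⟨Finset.mem_range.2 (colAt_lt hk.2), hk.2⟩

lemma pos_unique {c : Fin (R + B) → Bool} {p q : ℕ} (hp : colAt R B c p = true)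
    (hq : colAt R B c q = true) (h : cnt R B c p = cnt R B c q) : p = q := by
  by_contra hne
  wlog hlt : p < q generalizing p q
  · exact this hq hp h.symm (fun e => hne e.symm) (by omega)
  have h1 : cnt R B c (p + 1) = cnt R B c p + 1 := by
    have := cnt_run c (Nat.le_succ p) (a := p) (b := p)
      (by intro k hk; rw [Finset.mem_Icc] at hk; have : k = p := by omega
          rw [this]; exact hp)
    simpa using this
  have h2 : cnt R B c (p + 1) ≤ cnt R B c q := cnt_mono c (by omega)
  omega
lemma redPos_spec {c : Fin (R + B) → Bool} (hc : c ∈ arrangements R B) {i : ℕ} (hi : i < R) :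
    colAt R B c (redPos R B c i) = true ∧ cnt R B c (redPos R B c i) = i := by
  classical
  set s : Finset (Fin (R+B)) := Finset.univ.filter fun j => c j = true with hs
  have hcard : s.card = R := by simpa [arrangements, hs] using hc
  set l : List ℕ := (s.sort (· ≤ ·)).map Fin.val with hl
  have hlen : l.length = R := by rw [hl, List.length_map, Finset.length_sort, hcard]
  have hnodup : l.Nodup := (Finset.sort_nodup _ _).map Fin.val_injective
  have hsort : l.Pairwise (· < ·) := List.Pairwise.map _ (fun a b h => by exact_mod_cast h)
    ((Finset.sortedLT_sort s).pairwise)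
  have hmem : ∀ k, k ∈ l ↔ colAt R B c k = true := by
    intro k
    rw [hl]
    simp only [List.mem_map, Finset.mem_sort, hs, Finset.mem_filter, Finset.mem_univ, true_and]
    constructor
    · rintro ⟨j, hj, rfl⟩; simpa [colAt, j.isLt] using hj
    · intro h
      have hk : k < R + B := by
        by_contra hk; simp [colAt, hk] at h
      exact ⟨⟨k, hk⟩, by simpa [colAt, hk] using h, rfl⟩
  have hil : i < l.length := by omega
  have hp : redPos R B c i = l[i] := by
    rw [redPos, ← hl]
    exact List.getD_eq_getElem l 0 hil
  constructor
  · rw [hp, ← hmem]; exact List.getElem_mem hil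
  · rw [hp]
    unfold cnt
    have hset : (Finset.range l[i]).filter (fun k => colAt R B c k = true)
        = (l.take i).toFinset := by
      ext k
      simp only [Finset.mem_filter, Finset.mem_range, List.mem_toFinset]
      constructor
      · rintro ⟨hk, hcol⟩
        rw [← hmem] at hcol
        obtain ⟨m, hm, rfl⟩ := List.mem_iff_getElem.1 hcol
        have hmi : m < i := by
          by_contra hmi
          have : l[i] ≤ l[m] := by
            rcases Nat.eq_or_lt_of_le (Nat.le_of_not_lt hmi) with h | h
            · simp [h]
            · exact le_of_lt (List.Pairwise.rel_get_of_lt hsort (a := ⟨i, hil⟩) (b := ⟨m, hm⟩) h)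
          omega
        have hmt : m < (l.take i).length := by rw [List.length_take]; omega
        have : (l.take i)[m] = l[m] := List.getElem_take
        rw [← this]
        exact List.getElem_mem hmt
      · intro hk
        obtain ⟨m, hm, rfl⟩ := List.mem_iff_getElem.1 hk
        have hmlen : m < l.length := by
          have := List.length_take (i := i) (l := l); have := hm; omega
        rw [List.getElem_take]
        refine ⟨?_, (hmem _).1 (List.getElem_mem hmlen)⟩
        have hmi : m < i := by have := List.length_take (i := i) (l := l); omega
        exact List.Pairwise.rel_get_of_lt hsort (a := ⟨m, hmlen⟩) (b := ⟨i, hil⟩) (by exact hmi)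
    rw [hset, List.toFinset_card_of_nodup (hnodup.sublist (List.take_sublist i l)),
      List.length_take]
    omega
lemma redPos_unique {c : Fin (R + B) → Bool} (hc : c ∈ arrangements R B) {i p : ℕ}
    (hi : i < R) (hp : colAt R B c p = true) (hcnt : cnt R B c p = i) :
    redPos R B c i = p := by
  obtain ⟨h1, h2⟩ := redPos_spec hc hi
  exact pos_unique h1 hp (by rw [h2, hcnt])

lemma card_arrangements (R B : ℕ) : (arrangements R B).card = (R + B).choose R := by
  have : (arrangements R B).card = (Finset.powersetCard R (Finset.univ : Finset (Fin (R+B)))).card := by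
    refine Finset.card_nbij' (fun c => Finset.univ.filter fun j => c j = true)
      (fun s => fun j => decide (j ∈ s)) ?_ ?_ ?_ ?_
    · intro c hc
      rw [Finset.mem_coe, Finset.mem_powersetCard_univ]
      simpa [arrangements] using hc
    · intro s hs
      rw [Finset.mem_coe, Finset.mem_powersetCard_univ] at hs
      simp only [Finset.mem_coe, arrangements, Finset.mem_filter, Finset.mem_univ, true_and]
      have : (Finset.univ.filter fun j => decide (j ∈ s) = true) = s := by
        ext j; simp
      rw [this, hs]
    · intro c hc
      funext j
      simp
    · intro s hs
      ext j
      simp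
  rw [this, Finset.card_powersetCard, Finset.card_univ, Fintype.card_fin]
/-- F predicate: positions `redPos i .. redPos i + t` are all red. -/
def PF (R B : ℕ) (i t : ℕ) (c : Fin (R + B) → Bool) : Prop :=
  ∀ k ∈ Finset.Icc (redPos R B c i) (redPos R B c i + t), colAt R B c k = true

/-- G predicate: `t ≤ redPos i` and positions `redPos i - t .. redPos i` are all red. -/
def PG (R B : ℕ) (i t : ℕ) (c : Fin (R + B) → Bool) : Prop :=
  1 ≤ t ∧ t ≤ redPos R B c i ∧
    ∀ k ∈ Finset.Icc (redPos R B c i - t) (redPos R B c i), colAt R B c k = true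

instance (i t : ℕ) : DecidablePred (PF R B i t) := fun c => by unfold PF; infer_instance
instance (i t : ℕ) : DecidablePred (PG R B i t) := fun c => by unfold PG; infer_instance

lemma F_facts {c : Fin (R + B) → Bool} (hc : c ∈ arrangements R B) {i t : ℕ} (hi : i < R)
    (hF : PF R B i t c) :
    i + t + 1 ≤ R ∧ redPos R B c i + t < R + B ∧
      cnt R B c (redPos R B c i + t + 1) = i + t + 1 := by
  obtain ⟨hcol, hcnt⟩ := redPos_spec hc hi
  set p := redPos R B c i with hp
  have hpt : p + t < R + B := colAt_lt (hF (p + t) (Finset.mem_Icc.2 ⟨by omega, by omega⟩))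
  have hrun : cnt R B c (p + t + 1) = cnt R B c p + (p + t + 1 - p) :=
    cnt_run c (by omega) hF
  have h1 : cnt R B c (p + t + 1) = i + t + 1 := by rw [hrun, hcnt]; omega
  have h2 : cnt R B c (p + t + 1) ≤ R := cnt_le hc _
  exact ⟨by omega, hpt, h1⟩

lemma G_facts {c : Fin (R + B) → Bool} (hc : c ∈ arrangements R B) {i t : ℕ} (hi : i < R)
    (hG : PG R B i t c) :
    t ≤ i ∧ t + 1 ≤ R ∧ redPos R B c i < R + B ∧
      cnt R B c (redPos R B c i - t) = i - t := by
  obtain ⟨hcol, hcnt⟩ := redPos_spec hc hi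
  set p := redPos R B c i with hp
  obtain ⟨ht1, htp, hrun⟩ := hG
  have hpn : p < R + B := colAt_lt hcol
  have h1 : cnt R B c (p + 1) = cnt R B c (p - t) + (p + 1 - (p - t)) :=
    cnt_run c (by omega) hrun
  have h2 : cnt R B c (p + 1) = cnt R B c p + (p + 1 - p) :=
    cnt_run c (by omega) (by
      intro k hk
      rw [Finset.mem_Icc] at hk
      have : k = p := by omega
      rw [this]; exact hcol)
  have h3 : cnt R B c (p + 1) ≤ R := cnt_le hc _
  have h4 : p + 1 - (p - t) = t + 1 := by omega
  have h5 : cnt R B c (p - t) ≤ cnt R B c p := cnt_mono c (by omega)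
  refine ⟨by omega, by omega, hpn, by omega⟩

lemma F_inj_le {c1 c2 : Fin (R + B) → Bool} (hc1 : c1 ∈ arrangements R B)
    (hc2 : c2 ∈ arrangements R B) {i t : ℕ} (hi : i < R) (htR : t ≤ R)
    (hF1 : PF R B i t c1) (hF2 : PF R B i t c2)
    (heq : (fun k : Fin (R - t + B) =>
        if k.val ≤ redPos R B c1 i then colAt R B c1 k.val else colAt R B c1 (k.val + t))
      = (fun k : Fin (R - t + B) =>
        if k.val ≤ redPos R B c2 i then colAt R B c2 k.val else colAt R B c2 (k.val + t)))
    (hle : redPos R B c1 i ≤ redPos R B c2 i) :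
    redPos R B c1 i = redPos R B c2 i := by
  set p1 := redPos R B c1 i with hp1
  set p2 := redPos R B c2 i with hp2
  obtain ⟨hitR1, hptn1, -⟩ := F_facts hc1 hi hF1
  obtain ⟨hcol1, hcnt1⟩ := redPos_spec hc1 hi
  obtain ⟨hcol2, hcnt2⟩ := redPos_spec hc2 hi
  have hp1m : p1 < R - t + B := by omega
  have hagree : ∀ k, k ≤ p1 → colAt R B c1 k = colAt R B c2 k := by
    intro k hk
    have hkm : k < R - t + B := by omega
    have := congrFun heq ⟨k, hkm⟩
    dsimp only at this
    rwa [if_pos (by exact hk), if_pos (by exact le_trans hk hle)] at this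
  have hcol2' : colAt R B c2 p1 = true := by rw [← hagree p1 le_rfl]; exact hcol1
  have hcnt2' : cnt R B c2 p1 = i := by
    rw [← hcnt1]
    unfold cnt
    congr 1
    apply Finset.filter_congr
    intro k hk
    rw [Finset.mem_range] at hk
    rw [hagree k (by omega)]
  exact pos_unique hcol2' hcol2 (by rw [hcnt2', hcnt2])

lemma cntF_le {i t : ℕ} (hi : i < R) (ht : 1 ≤ t) (htR : t ≤ R) :
    ((arrangements R B).filter (PF R B i t)).card ≤ (R + B - t).choose B := by
  have hcb : (R - t + B).choose (R - t) = (R + B - t).choose B := by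
    rw [← Nat.choose_symm (by omega : R - t ≤ R - t + B)]
    congr 1 <;> omega
  rw [← hcb, ← card_arrangements (R - t) B]
  apply Finset.card_le_card_of_injOn
    (fun c => fun k : Fin (R - t + B) =>
      if k.val ≤ redPos R B c i then colAt R B c k.val else colAt R B c (k.val + t))
  · intro c hc0
    rw [Finset.mem_coe, Finset.mem_filter] at hc0
    obtain ⟨hc, hF⟩ := hc0
    obtain ⟨hitR, hptn, hcntpt⟩ := F_facts hc hi hF
    obtain ⟨hcol, hcnt⟩ := redPos_spec hc hi
    set p := redPos R B c i with hp
    set c' : Fin (R - t + B) → Bool := fun k =>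
      if k.val ≤ p then colAt R B c k.val else colAt R B c (k.val + t) with hc'
    have hpm : p < R - t + B := by omega
    have hcol' : ∀ k, k < R - t + B →
        colAt (R - t) B c' k = (if k ≤ p then colAt R B c k else colAt R B c (k + t)) := by
      intro k hk
      have h1 : colAt (R - t) B c' k = c' ⟨k, hk⟩ := dif_pos hk
      rw [h1]
    show c' ∈ arrangements (R - t) B; rw [mem_arr, card_eq_cnt]
    have hsplit := cnt_split (R := R - t) (B := B) c' (a := p + 1) (b := R - t + B)
      (by omega)
    have hlow : cnt (R - t) B c' (p + 1) = i + 1 := by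
      have hfc : (Finset.range (p + 1)).filter (fun k => colAt (R - t) B c' k = true)
          = (Finset.range (p + 1)).filter (fun k => colAt R B c k = true) := by
        apply Finset.filter_congr
        intro k hk
        rw [Finset.mem_range] at hk
        rw [hcol' k (by omega), if_pos (by omega)]
      have h1 : cnt (R - t) B c' (p + 1) = cnt R B c (p + 1) := by
        unfold cnt
        rw [hfc]
      have h2 : cnt R B c (p + 1) = cnt R B c p + (p + 1 - p) := by
        apply cnt_run c (by omega)
        intro k hk
        rw [Finset.mem_Icc] at hk
        have : k = p := by omega
        rw [this]; exact hcol
      omega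
    have hhigh : ((Finset.Ico (p + 1) (R - t + B)).filter
        fun k => colAt (R - t) B c' k = true).card = R - (i + t + 1) := by
      have hfc : ((Finset.Ico (p + 1) (R - t + B)).filter
          fun k => colAt (R - t) B c' k = true)
          = ((Finset.Ico (p + 1) (R - t + B)).filter
            fun k => colAt R B c (k + t) = true) := by
        apply Finset.filter_congr
        intro k hk
        rw [Finset.mem_Ico] at hk
        rw [hcol' k (by omega), if_neg (by omega)]
      rw [hfc]
      have hbij : ((Finset.Ico (p + 1) (R - t + B)).filter
          fun k => colAt R B c (k + t) = true).card
          = ((Finset.Ico (p + t + 1) (R + B)).filter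
            fun k => colAt R B c k = true).card := by
        apply Finset.card_nbij' (fun k => k + t) (fun k => k - t)
        · intro k hk
          simp only [Finset.mem_coe, Finset.mem_filter, Finset.mem_Ico] at hk ⊢
          exact ⟨⟨by omega, by omega⟩, hk.2⟩
        · intro k hk
          simp only [Finset.mem_coe, Finset.mem_filter, Finset.mem_Ico] at hk ⊢
          refine ⟨⟨by omega, by omega⟩, ?_⟩
          have : k - t + t = k := by omega
          rw [this]; exact hk.2
        · intro k _; dsimp only; omega
        · intro k hk
          simp only [Finset.mem_coe, Finset.mem_filter, Finset.mem_Ico] at hk ⊢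
          omega
      rw [hbij]
      have hs := cnt_split (R := R) (B := B) c (a := p + t + 1) (b := R + B) (by omega)
      have htot : cnt R B c (R + B) = R := cnt_total hc
      omega
    rw [show (R - t) + B = R - t + B from rfl] at hsplit ⊢
    omega
  · intro c1 h1 c2 h2 heq
    rw [Finset.mem_coe, Finset.mem_filter] at h1 h2
    obtain ⟨hc1, hF1⟩ := h1
    obtain ⟨hc2, hF2⟩ := h2
    dsimp only at heq
    have hpp : redPos R B c1 i = redPos R B c2 i := by
      rcases le_total (redPos R B c1 i) (redPos R B c2 i) with h | h
      · exact F_inj_le hc1 hc2 hi htR hF1 hF2 heq h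
      · exact (F_inj_le hc2 hc1 hi htR hF2 hF1 heq.symm h).symm
    set p := redPos R B c1 i with hp
    obtain ⟨hitR, hptn, -⟩ := F_facts hc1 hi hF1
    funext j
    have hagree : ∀ k : Fin (R - t + B),
        (if k.val ≤ p then colAt R B c1 k.val else colAt R B c1 (k.val + t))
          = (if k.val ≤ p then colAt R B c2 k.val else colAt R B c2 (k.val + t)) := by
      intro k
      have := congrFun heq k
      rwa [← hpp] at this
    rcases le_or_gt j.val p with hj | hj
    · have := hagree ⟨j.val, by omega⟩
      rw [if_pos (by exact hj), if_pos (by exact hj)] at this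
      have e1 : colAt R B c1 j.val = c1 j := colAt_fin c1 j
      have e2 : colAt R B c2 j.val = c2 j := colAt_fin c2 j
      rw [e1, e2] at this
      exact this
    · rcases le_or_gt j.val (p + t) with hj2 | hj2
      · have e1 : colAt R B c1 j.val = true := hF1 j.val (Finset.mem_Icc.2 ⟨by omega, by omega⟩)
        have e2 : colAt R B c2 j.val = true := by
          have := hF2 j.val (Finset.mem_Icc.2 ⟨by rw [← hpp]; omega, by rw [← hpp]; omega⟩)
          exact this
        rw [colAt_fin] at e1 e2
        rw [e1, e2]
      · have hkm : j.val - t < R - t + B := by omega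
        have := hagree ⟨j.val - t, hkm⟩
        rw [if_neg (by dsimp only; omega), if_neg (by dsimp only; omega)] at this
        have hjt : j.val - t + t = j.val := by omega
        rw [hjt] at this
        rw [colAt_fin, colAt_fin] at this
        exact this

lemma G_inj_le {c1 c2 : Fin (R + B) → Bool} (hc1 : c1 ∈ arrangements R B)
    (hc2 : c2 ∈ arrangements R B) {i t : ℕ} (hi : i < R) (htR : t ≤ R)
    (hG1 : PG R B i t c1) (hG2 : PG R B i t c2)
    (heq : (fun k : Fin (R - t + B) =>
        if k.val < redPos R B c1 i - t then colAt R B c1 k.val else colAt R B c1 (k.val + t))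
      = (fun k : Fin (R - t + B) =>
        if k.val < redPos R B c2 i - t then colAt R B c2 k.val else colAt R B c2 (k.val + t)))
    (hle : redPos R B c1 i ≤ redPos R B c2 i) :
    redPos R B c1 i = redPos R B c2 i := by
  set p1 := redPos R B c1 i with hp1
  set p2 := redPos R B c2 i with hp2
  obtain ⟨hti1, htR1, hp1n, hcntm1⟩ := G_facts hc1 hi hG1
  obtain ⟨hti2, htR2, hp2n, hcntm2⟩ := G_facts hc2 hi hG2
  obtain ⟨ht1, htp1, hrun1⟩ := hG1
  obtain ⟨ht2, htp2, hrun2⟩ := hG2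
  have hp1m : p1 - t < R - t + B := by omega
  have hagree : ∀ k, k < p1 - t → colAt R B c1 k = colAt R B c2 k := by
    intro k hk
    have hkm : k < R - t + B := by omega
    have hcnd1 : ((⟨k, hkm⟩ : Fin (R - t + B)).val < p1 - t) := by show k < p1 - t; omega
    have hcnd2 : ((⟨k, hkm⟩ : Fin (R - t + B)).val < p2 - t) := by show k < p2 - t; omega
    have := congrFun heq ⟨k, hkm⟩
    rwa [if_pos hcnd1, if_pos hcnd2] at this
  have hcnt2' : cnt R B c2 (p1 - t) = i - t := by
    rw [← hcntm1]
    unfold cnt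
    congr 1
    apply Finset.filter_congr
    intro k hk
    rw [Finset.mem_range] at hk
    rw [hagree k (by omega)]
  have hcol2l : colAt R B c2 (p2 - t) = true :=
    hrun2 (p2 - t) (Finset.mem_Icc.2 ⟨le_rfl, by omega⟩)
  have hcol2' : colAt R B c2 (p1 - t) = true := by
    rcases eq_or_lt_of_le (by omega : p1 - t ≤ p2 - t) with h | h
    · rw [h]; exact hcol2l
    · have hcnd1 : ¬ ((⟨p1 - t, hp1m⟩ : Fin (R - t + B)).val < p1 - t) := by
        show ¬ (p1 - t < p1 - t); omega
      have hcnd2 : ((⟨p1 - t, hp1m⟩ : Fin (R - t + B)).val < p2 - t) := by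
        show p1 - t < p2 - t; omega
      have := congrFun heq ⟨p1 - t, hp1m⟩
      rw [if_neg hcnd1, if_pos hcnd2] at this
      have hpt : p1 - t + t = p1 := by omega
      rw [hpt] at this
      rw [← this]
      exact hrun1 p1 (Finset.mem_Icc.2 ⟨by omega, le_rfl⟩)
  have : p1 - t = p2 - t := pos_unique hcol2' hcol2l (by rw [hcnt2', hcntm2])
  omega

lemma cntG_le {i t : ℕ} (hi : i < R) (ht : 1 ≤ t) (htR : t ≤ R) :
    ((arrangements R B).filter (PG R B i t)).card ≤ (R + B - t).choose B := by
  have hcb : (R - t + B).choose (R - t) = (R + B - t).choose B := by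
    rw [← Nat.choose_symm (by omega : R - t ≤ R - t + B)]
    congr 1 <;> omega
  rw [← hcb, ← card_arrangements (R - t) B]
  apply Finset.card_le_card_of_injOn
    (fun c => fun k : Fin (R - t + B) =>
      if k.val < redPos R B c i - t then colAt R B c k.val else colAt R B c (k.val + t))
  · intro c hc0
    rw [Finset.mem_coe, Finset.mem_filter] at hc0
    obtain ⟨hc, hG⟩ := hc0
    obtain ⟨hti, htR', hpn, hcntm⟩ := G_facts hc hi hG
    obtain ⟨hcol, hcnt⟩ := redPos_spec hc hi
    obtain ⟨ht1, htp, hrun⟩ := hG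
    set p := redPos R B c i with hp
    set c' : Fin (R - t + B) → Bool := fun k =>
      if k.val < p - t then colAt R B c k.val else colAt R B c (k.val + t) with hc'
    have hpm : p - t < R - t + B := by omega
    have hcol' : ∀ k, k < R - t + B →
        colAt (R - t) B c' k = (if k < p - t then colAt R B c k else colAt R B c (k + t)) := by
      intro k hk
      have h1 : colAt (R - t) B c' k = c' ⟨k, hk⟩ := dif_pos hk
      rw [h1]
    show c' ∈ arrangements (R - t) B; rw [mem_arr, card_eq_cnt]
    have hsplit := cnt_split (R := R - t) (B := B) c' (a := p - t) (b := R - t + B)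
      (by omega)
    have hlow : cnt (R - t) B c' (p - t) = i - t := by
      have hfc : (Finset.range (p - t)).filter (fun k => colAt (R - t) B c' k = true)
          = (Finset.range (p - t)).filter (fun k => colAt R B c k = true) := by
        apply Finset.filter_congr
        intro k hk
        rw [Finset.mem_range] at hk
        rw [hcol' k (by omega), if_pos (by omega)]
      have h1 : cnt (R - t) B c' (p - t) = cnt R B c (p - t) := by
        unfold cnt
        rw [hfc]
      omega
    have hhigh : ((Finset.Ico (p - t) (R - t + B)).filter
        fun k => colAt (R - t) B c' k = true).card = R - i := by
      have hfc : ((Finset.Ico (p - t) (R - t + B)).filter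
          fun k => colAt (R - t) B c' k = true)
          = ((Finset.Ico (p - t) (R - t + B)).filter
            fun k => colAt R B c (k + t) = true) := by
        apply Finset.filter_congr
        intro k hk
        rw [Finset.mem_Ico] at hk
        rw [hcol' k (by omega), if_neg (by omega)]
      rw [hfc]
      have hbij : ((Finset.Ico (p - t) (R - t + B)).filter
          fun k => colAt R B c (k + t) = true).card
          = ((Finset.Ico p (R + B)).filter
            fun k => colAt R B c k = true).card := by
        apply Finset.card_nbij' (fun k => k + t) (fun k => k - t)
        · intro k hk
          simp only [Finset.mem_coe, Finset.mem_filter, Finset.mem_Ico] at hk ⊢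
          exact ⟨⟨by omega, by omega⟩, hk.2⟩
        · intro k hk
          simp only [Finset.mem_coe, Finset.mem_filter, Finset.mem_Ico] at hk ⊢
          refine ⟨⟨by omega, by omega⟩, ?_⟩
          have : k - t + t = k := by omega
          rw [this]; exact hk.2
        · intro k _; dsimp only; omega
        · intro k hk
          simp only [Finset.mem_coe, Finset.mem_filter, Finset.mem_Ico] at hk ⊢
          omega
      rw [hbij]
      have hs := cnt_split (R := R) (B := B) c (a := p) (b := R + B) (by omega)
      have htot : cnt R B c (R + B) = R := cnt_total hc
      omega
    rw [show (R - t) + B = R - t + B from rfl] at hsplit ⊢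
    omega
  · intro c1 h1 c2 h2 heq
    rw [Finset.mem_coe, Finset.mem_filter] at h1 h2
    obtain ⟨hc1, hG1⟩ := h1
    obtain ⟨hc2, hG2⟩ := h2
    dsimp only at heq
    have hpp : redPos R B c1 i = redPos R B c2 i := by
      rcases le_total (redPos R B c1 i) (redPos R B c2 i) with h | h
      · exact G_inj_le hc1 hc2 hi htR hG1 hG2 heq h
      · exact (G_inj_le hc2 hc1 hi htR hG2 hG1 heq.symm h).symm
    set p := redPos R B c1 i with hp
    obtain ⟨hti, htR', hpn, -⟩ := G_facts hc1 hi hG1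
    obtain ⟨ht1, htp1, hrun1⟩ := hG1
    obtain ⟨ht2, htp2, hrun2⟩ := hG2
    funext j
    have hagree : ∀ k : Fin (R - t + B),
        (if k.val < p - t then colAt R B c1 k.val else colAt R B c1 (k.val + t))
          = (if k.val < p - t then colAt R B c2 k.val else colAt R B c2 (k.val + t)) := by
      intro k
      have := congrFun heq k
      rwa [← hpp] at this
    rcases lt_or_ge j.val (p - t) with hj | hj
    · have hkm : j.val < R - t + B := by omega
      have hcnd : ((⟨j.val, hkm⟩ : Fin (R - t + B)).val < p - t) := by
        show j.val < p - t; omega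
      have := hagree ⟨j.val, hkm⟩
      rw [if_pos hcnd, if_pos hcnd] at this
      rw [colAt_fin, colAt_fin] at this
      exact this
    · rcases le_or_gt j.val p with hj2 | hj2
      · have e1 : colAt R B c1 j.val = true := hrun1 j.val (Finset.mem_Icc.2 ⟨by omega, hj2⟩)
        have e2 : colAt R B c2 j.val = true :=
          hrun2 j.val (Finset.mem_Icc.2 ⟨by rw [← hpp]; omega, by rw [← hpp]; omega⟩)
        rw [colAt_fin] at e1 e2
        rw [e1, e2]
      · have hkm : j.val - t < R - t + B := by omega
        have hcnd : ¬ ((⟨j.val - t, hkm⟩ : Fin (R - t + B)).val < p - t) := by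
          show ¬ (j.val - t < p - t); omega
        have := hagree ⟨j.val - t, hkm⟩
        rw [if_neg hcnd, if_neg hcnd] at this
        have hjt : j.val - t + t = j.val := by omega
        rw [hjt] at this
        rw [colAt_fin, colAt_fin] at this
        exact this

lemma runCard_le {c : Fin (R + B) → Bool} {i : ℕ} (hp : redPos R B c i < R + B) :
    runCard R B c (redPos R B c i) ≤
      ((Finset.range (R + B)).filter fun t => PF R B i t c).card +
      ((Finset.range (R + B)).filter fun t => PG R B i t c).card := by
  set p := redPos R B c i with hpdef
  set S := (Finset.range (R + B)).filter fun j =>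
    ∀ k ∈ Finset.Icc (min p j) (max p j), colAt R B c k = true with hS
  have hsplit : (S.filter fun j => p ≤ j).card + (S.filter fun j => ¬ p ≤ j).card = S.card :=
    Finset.card_filter_add_card_filter_not _
  have h1 : (S.filter fun j => p ≤ j).card ≤
      ((Finset.range (R + B)).filter fun t => PF R B i t c).card := by
    apply Finset.card_le_card_of_injOn (fun j => j - p)
    · intro j hj
      simp only [hS, Finset.mem_coe, Finset.mem_filter, Finset.mem_range] at hj ⊢
      obtain ⟨⟨hjn, hcond⟩, hpj⟩ := hj
      refine ⟨by omega, ?_⟩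
      intro k hk
      rw [Finset.mem_Icc] at hk
      apply hcond
      rw [Finset.mem_Icc]
      constructor
      · exact le_trans (min_le_left _ _) hk.1
      · have : p + (j - p) = j := by omega
        rw [this] at hk
        omega
    · intro j1 h1 j2 h2 he
      simp only [hS, Finset.coe_filter, Set.mem_setOf_eq] at h1 h2
      obtain ⟨-, hle1⟩ := h1
      obtain ⟨-, hle2⟩ := h2
      dsimp only at he
      omega
  have h2 : (S.filter fun j => ¬ p ≤ j).card ≤
      ((Finset.range (R + B)).filter fun t => PG R B i t c).card := by
    apply Finset.card_le_card_of_injOn (fun j => p - j)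
    · intro j hj
      simp only [hS, Finset.mem_coe, Finset.mem_filter, Finset.mem_range] at hj ⊢
      obtain ⟨⟨hjn, hcond⟩, hpj⟩ := hj
      refine ⟨by omega, by omega, by omega, ?_⟩
      intro k hk
      rw [Finset.mem_Icc] at hk
      apply hcond
      rw [Finset.mem_Icc]
      omega
    · intro j1 h1 j2 h2 he
      simp only [hS, Finset.coe_filter, Set.mem_setOf_eq] at h1 h2
      obtain ⟨-, hle1⟩ := h1
      obtain ⟨-, hle2⟩ := h2
      dsimp only at he
      omega
  calc runCard R B c p = S.card := rfl
    _ = _ + _ := hsplit.symm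
    _ ≤ _ := add_le_add h1 h2

lemma hockey (R B : ℕ) (hR : 0 < R) :
    ∑ t ∈ Finset.Icc 1 R, (R + B - t).choose B ≤ (R + B).choose (B + 1) := by
  have himg : ∑ t ∈ Finset.Icc 1 R, (R + B - t).choose B
      = ∑ m ∈ (Finset.Icc 1 R).image (fun t => R + B - t), m.choose B := by
    rw [Finset.sum_image]
    intro t1 h1 t2 h2 he
    simp only [Finset.mem_coe, Finset.mem_Icc] at h1 h2 he
    omega
  rw [himg]
  have hsub : (Finset.Icc 1 R).image (fun t => R + B - t) ⊆ Finset.Icc B (R + B - 1) := by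
    intro m hm
    rw [Finset.mem_image] at hm
    obtain ⟨t, ht, rfl⟩ := hm
    rw [Finset.mem_Icc] at ht ⊢
    omega
  calc ∑ m ∈ (Finset.Icc 1 R).image (fun t => R + B - t), m.choose B
      ≤ ∑ m ∈ Finset.Icc B (R + B - 1), m.choose B :=
        Finset.sum_le_sum_of_subset hsub
    _ = (R + B - 1 + 1).choose (B + 1) := Nat.sum_Icc_choose _ _
    _ = (R + B).choose (B + 1) := by congr 1; omega

lemma sum_le_key {i : ℕ} (hR : 0 < R) (hi : i < R) :
    ∑ c ∈ arrangements R B, runCard R B c (redPos R B c i) ≤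
      (R + B).choose B + 2 * (R + B).choose (B + 1) := by
  classical
  have hsymm : (R + B).choose R = (R + B).choose B := by
    rw [← Nat.choose_symm (by omega : R ≤ R + B)]
    congr 1
    omega
  have step1 : ∑ c ∈ arrangements R B, runCard R B c (redPos R B c i) ≤
      ∑ c ∈ arrangements R B,
        (((Finset.range (R + B)).filter fun t => PF R B i t c).card +
         ((Finset.range (R + B)).filter fun t => PG R B i t c).card) := by
    apply Finset.sum_le_sum
    intro c hc
    obtain ⟨hcol, -⟩ := redPos_spec hc hi
    exact runCard_le (colAt_lt hcol)
  have swapF : ∑ c ∈ arrangements R B, ((Finset.range (R + B)).filter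
        fun t => PF R B i t c).card
      = ∑ t ∈ Finset.range (R + B), ((arrangements R B).filter (PF R B i t)).card := by
    simp_rw [Finset.card_filter]
    exact Finset.sum_comm
  have swapG : ∑ c ∈ arrangements R B, ((Finset.range (R + B)).filter
        fun t => PG R B i t c).card
      = ∑ t ∈ Finset.range (R + B), ((arrangements R B).filter (PG R B i t)).card := by
    simp_rw [Finset.card_filter]
    exact Finset.sum_comm
  have hrange : Finset.range (R + B) = insert 0 (Finset.Ico 1 (R + B)) := by
    ext x
    simp only [Finset.mem_range, Finset.mem_insert, Finset.mem_Ico]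
    omega
  have hFtail : ∀ t ∈ Finset.Ico 1 (R + B),
      ((arrangements R B).filter (PF R B i t)).card
        ≤ if t ≤ R then (R + B - t).choose B else 0 := by
    intro t ht
    rw [Finset.mem_Ico] at ht
    by_cases htR : t ≤ R
    · rw [if_pos htR]
      exact cntF_le hi ht.1 htR
    · rw [if_neg htR]
      rw [Nat.le_zero, Finset.card_eq_zero, Finset.filter_eq_empty_iff]
      intro c hc hF
      obtain ⟨h1, -, -⟩ := F_facts hc hi hF
      omega
  have hGtail : ∀ t ∈ Finset.Ico 1 (R + B),
      ((arrangements R B).filter (PG R B i t)).card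
        ≤ if t ≤ R then (R + B - t).choose B else 0 := by
    intro t ht
    rw [Finset.mem_Ico] at ht
    by_cases htR : t ≤ R
    · rw [if_pos htR]
      exact cntG_le hi ht.1 htR
    · rw [if_neg htR]
      rw [Nat.le_zero, Finset.card_eq_zero, Finset.filter_eq_empty_iff]
      intro c hc hG
      obtain ⟨-, h2, -, -⟩ := G_facts hc hi hG
      omega
  have hite : ∑ t ∈ Finset.Ico 1 (R + B), (if t ≤ R then (R + B - t).choose B else 0)
      ≤ (R + B).choose (B + 1) := by
    rw [← Finset.sum_filter]
    refine le_trans (Finset.sum_le_sum_of_subset ?_) (hockey R B hR)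
    intro t ht
    rw [Finset.mem_filter, Finset.mem_Ico] at ht
    rw [Finset.mem_Icc]
    omega
  have hFsum : ∑ t ∈ Finset.range (R + B), ((arrangements R B).filter (PF R B i t)).card
      ≤ (R + B).choose B + (R + B).choose (B + 1) := by
    rw [hrange, Finset.sum_insert (by simp)]
    have h0 : ((arrangements R B).filter (PF R B i 0)).card ≤ (R + B).choose B := by
      calc ((arrangements R B).filter (PF R B i 0)).card ≤ (arrangements R B).card :=
            Finset.card_filter_le _ _
        _ = (R + B).choose R := card_arrangements R B
        _ = (R + B).choose B := hsymm
    exact add_le_add h0 (le_trans (Finset.sum_le_sum hFtail) hite)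
  have hGsum : ∑ t ∈ Finset.range (R + B), ((arrangements R B).filter (PG R B i t)).card
      ≤ (R + B).choose (B + 1) := by
    rw [hrange, Finset.sum_insert (by simp)]
    have h0 : ((arrangements R B).filter (PG R B i 0)).card = 0 := by
      rw [Finset.card_eq_zero, Finset.filter_eq_empty_iff]
      intro c hc hG
      exact absurd hG.1 (by omega)
    rw [h0, zero_add]
    exact le_trans (Finset.sum_le_sum hGtail) hite
  calc ∑ c ∈ arrangements R B, runCard R B c (redPos R B c i)
      ≤ _ := step1
    _ = _ + _ := Finset.sum_add_distrib
    _ ≤ ((R + B).choose B + (R + B).choose (B + 1)) + (R + B).choose (B + 1) := by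
        rw [swapF, swapG]; exact add_le_add hFsum hGsum
    _ = (R + B).choose B + 2 * (R + B).choose (B + 1) := by ring

end RunAux

/-- In a uniformly random permutation of `R` red and `B` blue balls,
the expected size of the run of consecutive red balls containing the `i`-th
red ball is at most `4R/(B+1) + 2`. -/
theorem stmt_0 (R B : ℕ) (hR : 0 < R) (i : ℕ) (hi : i < R) :
    (∑ c ∈ arrangements R B, (runCard R B c (redPos R B c i) : ℝ)) /
      ((arrangements R B).card : ℝ) ≤ 4 * R / (B + 1) + 2 := by
  have hcard : (arrangements R B).card = (R + B).choose R := RunAux.card_arrangements R B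
  have hpos : 0 < (R + B).choose R := Nat.choose_pos (by omega)
  have hposR : (0 : ℝ) < ((arrangements R B).card : ℝ) := by
    rw [hcard]; exact_mod_cast hpos
  rw [div_le_iff₀ hposR]
  have hkey := RunAux.sum_le_key (R := R) (B := B) (i := i) hR hi
  have hsum : (∑ c ∈ arrangements R B, (runCard R B c (redPos R B c i) : ℝ))
      = ((∑ c ∈ arrangements R B, runCard R B c (redPos R B c i) : ℕ) : ℝ) := by
    push_cast
    rfl
  rw [hsum]
  have hsymm : (R + B).choose R = (R + B).choose B := by
    rw [← Nat.choose_symm (by omega : R ≤ R + B)]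
    congr 1
    omega
  set C : ℝ := ((R + B).choose B : ℝ) with hC
  set C' : ℝ := ((R + B).choose (B + 1) : ℝ) with hC'
  have h1 : ((∑ c ∈ arrangements R B, runCard R B c (redPos R B c i) : ℕ) : ℝ)
      ≤ C + 2 * C' := by
    rw [hC, hC']
    exact_mod_cast hkey
  refine le_trans h1 ?_
  rw [hcard, hsymm]
  have hb1 : (0 : ℝ) < (B : ℝ) + 1 := by positivity
  have hid : C' * ((B : ℝ) + 1) = C * R := by
    rw [hC, hC']
    have := Nat.choose_succ_right_eq (R + B) B
    have hRB : R + B - B = R := by omega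
    rw [hRB] at this
    exact_mod_cast this
  have hC'eq : C' = C * R / ((B : ℝ) + 1) := by
    rw [eq_div_iff (ne_of_gt hb1)]
    exact hid
  have hCpos : (0 : ℝ) ≤ C := by rw [hC]; positivity
  have hq : (0 : ℝ) ≤ C * R / ((B : ℝ) + 1) := by positivity
  have hexp : (4 * (R : ℝ) / ((B : ℝ) + 1) + 2) * C = 4 * (C * R / ((B : ℝ) + 1)) + 2 * C := by
    field_simp
  rw [hexp, hC'eq]
  linarith
end

section
/- If 0 ≤ N ≤ 2(R+1) and M ≤ N + (1 - N^2)/(4(R+1)), and N satisfies N ≤ 4(R+1)/B + 1 for some B > 3, then M ≤ 4(R+1)/(B+1) + 1. -/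
/-- Inductive step for bounding expected run lengths: if `0 ≤ N ≤ 2(R+1)`,
`M ≤ N + (1 - N²)/(4(R+1))`, and `N ≤ 4(R+1)/B + 1` for some `B > 3`,
then `M ≤ 4(R+1)/(B+1) + 1`. -/
theorem stmt_2 (R B N M : ℝ) (hR : 0 ≤ R) (hB : 3 < B)
    (hN0 : 0 ≤ N) (hN2 : N ≤ 2 * (R + 1))
    (hM : M ≤ N + (1 - N ^ 2) / (4 * (R + 1)))
    (hNB : N ≤ 4 * (R + 1) / B + 1) :
    M ≤ 4 * (R + 1) / (B + 1) + 1 := by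
  have ha : (0:ℝ) < 4 * (R + 1) := by linarith
  have hB0 : (0:ℝ) < B := by linarith
  have hB1 : (0:ℝ) < B + 1 := by linarith
  have h1 : (N - 1) * B ≤ 4 * (R + 1) := by
    rw [← le_div_iff₀ hB0]; linarith
  have key : N + (1 - N ^ 2) / (4 * (R + 1)) ≤ 4 * (R + 1) / (B + 1) + 1 := by
    rw [add_div' _ _ _ ha.ne', div_add' _ _ _ hB1.ne', div_le_div_iff₀ ha hB1]
    nlinarith [mul_pos ha hB1, sq_nonneg (N*B - 4*(R+1) - B),
      sq_nonneg (2*(R+1) - N),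
      mul_nonneg (sub_nonneg.2 hN2) (sub_nonneg.2 hN0),
      mul_nonneg hN0 hB0.le]
  linarith
end

section
/- For every positive integer d, (1 - 1/d)^d ≥ 1/e - 1/(e·d). -/
/-- For every positive integer `d`, `(1 - 1/d)^d ≥ 1/e - 1/(e·d)`. -/
theorem stmt_3 (d : ℕ) (hd : 0 < d) :
    (1 - 1 / (d : ℝ)) ^ d ≥ 1 / Real.exp 1 - 1 / (Real.exp 1 * d) := by
  rcases eq_or_lt_of_le (show 1 ≤ d from hd) with h1 | h2
  · simp [← h1]
  · -- d ≥ 2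
    have hd2 : 2 ≤ d := h2
    have hx2 : (2 : ℝ) ≤ (d : ℝ) := by exact_mod_cast hd2
    set x : ℝ := (d : ℝ) with hxdef
    have hx1 : (1 : ℝ) < x := by linarith
    have hxpos : (0 : ℝ) < x := by linarith
    have hx1pos : (0 : ℝ) < x - 1 := by linarith
    have hnonneg : (0 : ℝ) ≤ 1 - 1 / x := by
      rw [sub_nonneg, div_le_one hxpos]; linarith
    have hexp := Real.add_one_le_exp (1 / (x - 1))
    have hexppos : (0 : ℝ) < Real.exp (1 / (x - 1)) := Real.exp_pos _
    have key : Real.exp (-(1 / (x - 1))) ≤ 1 - 1 / x := by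
      rw [Real.exp_neg, inv_le_iff_one_le_mul₀' hexppos]
      have hq : x / (x - 1) ≤ Real.exp (1 / (x - 1)) := by
        have h3 : 1 / (x - 1) + 1 = x / (x - 1) := by field_simp; ring
        linarith
      have h4 : (1 : ℝ) = x / (x - 1) * (1 - 1 / x) := by field_simp
      calc (1 : ℝ) = x / (x - 1) * (1 - 1 / x) := h4
        _ ≤ Real.exp (1 / (x - 1)) * (1 - 1 / x) :=
            mul_le_mul_of_nonneg_right hq hnonneg
    have hkey2 : Real.exp (-(1 / (x - 1))) ^ (d - 1) ≤ (1 - 1 / x) ^ (d - 1) :=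
      pow_le_pow_left₀ (Real.exp_pos _).le key _
    have hcast : ((d - 1 : ℕ) : ℝ) = x - 1 := by
      rw [hxdef]; push_cast [Nat.cast_sub hd]; ring
    have hpowexp : Real.exp (-(1 / (x - 1))) ^ (d - 1) = Real.exp (-1) := by
      rw [← Real.exp_nat_mul, hcast]
      congr 1
      field_simp
    have hmain : Real.exp (-1) ≤ (1 - 1 / x) ^ (d - 1) := hpowexp ▸ hkey2
    have hdd : d = (d - 1) + 1 := (Nat.succ_pred_eq_of_pos hd).symm
    have hfinal : Real.exp (-1) * (1 - 1 / x) ≤ (1 - 1 / x) ^ d := by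
      rw [hdd, pow_succ]
      exact mul_le_mul_of_nonneg_right hmain hnonneg
    have hrhs : 1 / Real.exp 1 - 1 / (Real.exp 1 * x) = Real.exp (-1) * (1 - 1 / x) := by
      rw [Real.exp_neg]
      field_simp
    rw [ge_iff_le, hrhs]
    exact hfinal
end

section
/- For the complete bipartite graph between n_U users and n_I items, with a single item of value 1 chosen uniformly at random (all other items having value 0), the expected total reward (summed over all users, arriving in any order, each shown one item by the optimal deterministic algorithm) equals min{n_U, n_I}·(2n_U + 1 − min{n_U, n_I})/(2n_I). -/
/-- The history of (shown item, was-it-the-good-item) pairs produced by a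
deterministic algorithm `alg` on the complete bipartite graph, when the unique
value-1 item is `istar`, after `t` users have been served. -/
def hist (nI : ℕ) (alg : List (Fin nI × Bool) → Fin nI) (istar : Fin nI) :
    ℕ → List (Fin nI × Bool)
  | 0 => []
  | t + 1 =>
      hist nI alg istar t ++
        [(alg (hist nI alg istar t), decide (alg (hist nI alg istar t) = istar))]

/-- Total reward over `nU` users: each user gets reward 1 iff she is shown the
good item `istar`. -/
def totalReward (nU nI : ℕ) (alg : List (Fin nI × Bool) → Fin nI)
    (istar : Fin nI) : ℕ :=
  ∑ t ∈ Finset.range nU, if alg (hist nI alg istar t) = istar then 1 else 0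

/-- The history when the good item is never found. -/
def falseHist (nI : ℕ) (alg : List (Fin nI × Bool) → Fin nI) :
    ℕ → List (Fin nI × Bool)
  | 0 => []
  | t + 1 => falseHist nI alg t ++ [(alg (falseHist nI alg t), false)]

lemma falseHist_length (nI : ℕ) (alg : List (Fin nI × Bool) → Fin nI) (t : ℕ) :
    (falseHist nI alg t).length = t := by
  induction t with
  | zero => rfl
  | succ t ih => simp [falseHist, ih]

lemma falseHist_find? (nI : ℕ) (alg : List (Fin nI × Bool) → Fin nI) (t : ℕ) :
    (falseHist nI alg t).find? (fun p => p.2) = none := by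
  induction t with
  | zero => rfl
  | succ t ih => simp [falseHist, List.find?_append, ih]

lemma hist_eq_falseHist (nI : ℕ) (alg : List (Fin nI × Bool) → Fin nI)
    (istar : Fin nI) (t : ℕ)
    (h : ∀ s < t, alg (falseHist nI alg s) ≠ istar) :
    hist nI alg istar t = falseHist nI alg t := by
  induction t with
  | zero => rfl
  | succ t ih =>
      have ih' : hist nI alg istar t = falseHist nI alg t :=
        ih (fun s hs => h s (Nat.lt_succ_of_lt hs))
      have hne : alg (falseHist nI alg t) ≠ istar := h t (Nat.lt_succ_self t)
      simp [hist, falseHist, ih', hne]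

/-- The greedy algorithm: show the good item if it has been found, otherwise
explore a fresh item. -/
def greedy (nI : ℕ) (hI : 0 < nI) : List (Fin nI × Bool) → Fin nI :=
  fun h =>
    match h.find? (fun p => p.2) with
    | some p => p.1
    | none => ⟨h.length % nI, Nat.mod_lt _ hI⟩

lemma greedy_falseHist (nI : ℕ) (hI : 0 < nI) (t : ℕ) (ht : t < nI) :
    greedy nI hI (falseHist nI (greedy nI hI) t) = ⟨t, ht⟩ := by
  simp only [greedy, falseHist_find?, falseHist_length]
  congr 1
  exact Nat.mod_eq_of_lt ht

lemma hist_greedy (nI : ℕ) (hI : 0 < nI) (istar : Fin nI) (j : ℕ) :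
    hist nI (greedy nI hI) istar ((istar : ℕ) + 1 + j) =
      falseHist nI (greedy nI hI) (istar : ℕ) ++
        List.replicate (j + 1) (istar, true) := by
  induction j with
  | zero =>
      have hbase : hist nI (greedy nI hI) istar (istar : ℕ) =
          falseHist nI (greedy nI hI) (istar : ℕ) := by
        apply hist_eq_falseHist
        intro s hs
        rw [greedy_falseHist nI hI s (hs.trans istar.isLt)]
        intro hcon
        exact absurd (congrArg Fin.val hcon) (by simpa using hs.ne)
      have hshow : greedy nI hI (falseHist nI (greedy nI hI) (istar : ℕ)) = istar := by
        rw [greedy_falseHist nI hI _ istar.isLt]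
      simp [hist, hbase, hshow]
  | succ j ih =>
      have hshow : greedy nI hI (falseHist nI (greedy nI hI) (istar : ℕ) ++
          List.replicate (j + 1) (istar, true)) = istar := by
        simp [greedy, List.find?_append, falseHist_find?, List.replicate_succ,
          List.find?]
      have : (istar : ℕ) + 1 + (j + 1) = ((istar : ℕ) + 1 + j) + 1 := by omega
      rw [this]
      simp only [hist, ih, hshow]
      rw [List.replicate_succ' (n := j + 1), List.append_assoc]
      simp

lemma greedy_reward (nU nI : ℕ) (hI : 0 < nI) (istar : Fin nI) :
    totalReward nU nI (greedy nI hI) istar = nU - (istar : ℕ) := by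
  have hterm : ∀ t, (if greedy nI hI (hist nI (greedy nI hI) istar t) = istar
      then 1 else 0) = if (istar : ℕ) ≤ t then 1 else 0 := by
    intro t
    rcases lt_trichotomy t (istar : ℕ) with h | h | h
    · have hfh : hist nI (greedy nI hI) istar t = falseHist nI (greedy nI hI) t := by
        apply hist_eq_falseHist
        intro s hs
        rw [greedy_falseHist nI hI s ((hs.trans h).trans istar.isLt)]
        intro hcon
        exact absurd (congrArg Fin.val hcon) (by simpa using (hs.trans h).ne)
      rw [hfh, greedy_falseHist nI hI t (h.trans istar.isLt)]
      have : (⟨t, h.trans istar.isLt⟩ : Fin nI) ≠ istar := by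
        intro hcon
        exact absurd (congrArg Fin.val hcon) (by simpa using h.ne)
      simp [this, Nat.not_le.mpr h]
    · subst h
      have hfh : hist nI (greedy nI hI) istar (istar : ℕ) =
          falseHist nI (greedy nI hI) (istar : ℕ) := by
        apply hist_eq_falseHist
        intro s hs
        rw [greedy_falseHist nI hI s (hs.trans istar.isLt)]
        intro hcon
        exact absurd (congrArg Fin.val hcon) (by simpa using hs.ne)
      rw [hfh, greedy_falseHist nI hI _ istar.isLt]
      simp
    · obtain ⟨j, rfl⟩ : ∃ j, t = (istar : ℕ) + 1 + j := ⟨t - (istar : ℕ) - 1, by omega⟩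
      rw [hist_greedy]
      have hshow : greedy nI hI (falseHist nI (greedy nI hI) (istar : ℕ) ++
          List.replicate (j + 1) (istar, true)) = istar := by
        simp [greedy, List.find?_append, falseHist_find?, List.replicate_succ,
          List.find?]
      simp [hshow, Nat.le_of_lt h]
  unfold totalReward
  rw [Finset.sum_congr rfl (fun t _ => hterm t)]
  induction nU with
  | zero => simp
  | succ n ihn =>
      rw [Finset.sum_range_succ, ihn]
      by_cases h : (istar : ℕ) ≤ n <;> simp [h] <;> omega

/-- Sum over a finset of naturals of `nU - t` is at most the corresponding
sum over an initial segment of the same cardinality. -/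
lemma sum_sub_le (k : ℕ) : ∀ (nU : ℕ) (A : Finset ℕ), A.card = k →
    ∑ t ∈ A, (nU - t) ≤ ∑ j ∈ Finset.range k, (nU - j) := by
  induction k with
  | zero => intro nU A hA; simp [Finset.card_eq_zero.mp hA]
  | succ k ih =>
      intro nU A hA
      have hne : A.Nonempty := Finset.card_pos.mp (by omega)
      set a := A.min' hne with ha
      have hmem : a ∈ A := A.min'_mem hne
      have hA' : (A.erase a).card = k := by
        rw [Finset.card_erase_of_mem hmem, hA]
        omega
      have hpos : ∀ t ∈ A.erase a, 1 ≤ t := by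
        intro t ht
        have h1 : t ∈ A := Finset.mem_of_mem_erase ht
        have h2 : t ≠ a := Finset.ne_of_mem_erase ht
        have := A.min'_le t h1
        omega
      have hinj : ∀ x ∈ A.erase a, ∀ y ∈ A.erase a, x - 1 = y - 1 → x = y := by
        intro x hx y hy hxy
        have := hpos x hx; have := hpos y hy; omega
      have hcard : ((A.erase a).image (· - 1)).card = k := by
        rw [Finset.card_image_of_injOn hinj, hA']
      calc ∑ t ∈ A, (nU - t)
          = (nU - a) + ∑ t ∈ A.erase a, (nU - t) :=
            (Finset.add_sum_erase A _ hmem).symm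
        _ ≤ nU + ∑ t ∈ (A.erase a).image (· - 1), (nU - 1 - t) := by
            gcongr
            · omega
            · rw [Finset.sum_image hinj]
              apply Finset.sum_le_sum
              intro t ht
              have := hpos t ht
              omega
        _ ≤ nU + ∑ j ∈ Finset.range k, (nU - 1 - j) :=
            Nat.add_le_add_left (ih (nU - 1) _ hcard) nU
        _ = ∑ j ∈ Finset.range (k + 1), (nU - j) := by
            rw [Finset.sum_range_succ' (fun j => nU - j) k]
            have h2 : ∑ j ∈ Finset.range k, (nU - (j + 1)) =
                ∑ j ∈ Finset.range k, (nU - 1 - j) :=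
              Finset.sum_congr rfl (fun j _ => by omega)
            rw [h2, Nat.sub_zero]
            exact Nat.add_comm _ _

lemma upper_bound (nU nI : ℕ) (alg : List (Fin nI × Bool) → Fin nI) :
    ∑ istar : Fin nI, totalReward nU nI alg istar ≤
      ∑ j ∈ Finset.range (min nU nI), (nU - j) := by
  classical
  set b : ℕ → Fin nI := fun t => alg (falseHist nI alg t) with hb
  set τ : Fin nI → ℕ := fun istar =>
    if h : ∃ t, t < nU ∧ b t = istar then Nat.find h else nU with hτ
  set S : Finset (Fin nI) :=
    Finset.univ.filter (fun istar => ∃ t, t < nU ∧ b t = istar) with hS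
  -- per-item bound
  have hbound : ∀ istar : Fin nI, totalReward nU nI alg istar ≤ nU - τ istar := by
    intro istar
    by_cases h : ∃ t, t < nU ∧ b t = istar
    · have hτi : τ istar = Nat.find h := by simp [hτ, h]
      have hτlt : τ istar < nU := by rw [hτi]; exact (Nat.find_spec h).1
      have hzero : ∀ t < τ istar,
          (if alg (hist nI alg istar t) = istar then 1 else 0) = 0 := by
        intro t ht
        have hmin : ∀ s < τ istar, b s ≠ istar := by
          intro s hs
          rw [hτi] at hs
          have := Nat.find_min h hs
          push_neg at this
          intro hcon
          exact absurd hcon (this (hs.trans (Nat.find_spec h).1))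
        have hfh : hist nI alg istar t = falseHist nI alg t :=
          hist_eq_falseHist nI alg istar t (fun s hs => hmin s (hs.trans ht))
        rw [hfh]
        exact if_neg (hmin t ht)
      unfold totalReward
      rw [Finset.range_eq_Ico,
        ← Finset.sum_Ico_consecutive _ (Nat.zero_le (τ istar)) (le_of_lt hτlt)]
      have h1 : ∑ t ∈ Finset.Ico 0 (τ istar),
          (if alg (hist nI alg istar t) = istar then 1 else 0) = 0 := by
        apply Finset.sum_eq_zero
        intro t ht
        rw [Finset.mem_Ico] at ht
        exact hzero t ht.2
      rw [h1, zero_add]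
      calc ∑ t ∈ Finset.Ico (τ istar) nU,
            (if alg (hist nI alg istar t) = istar then 1 else 0)
          ≤ ∑ _t ∈ Finset.Ico (τ istar) nU, 1 := by
            apply Finset.sum_le_sum; intro t _; split <;> omega
        _ = nU - τ istar := by rw [Finset.sum_const, smul_eq_mul, mul_one,
            Nat.card_Ico]
    · have hzero : ∀ t < nU,
          (if alg (hist nI alg istar t) = istar then 1 else 0) = 0 := by
        intro t ht
        push_neg at h
        have hfh : hist nI alg istar t = falseHist nI alg t :=
          hist_eq_falseHist nI alg istar t
            (fun s hs => h s (hs.trans ht))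
        rw [hfh]
        exact if_neg (h t ht)
      unfold totalReward
      rw [Finset.sum_eq_zero (fun t ht => hzero t (Finset.mem_range.mp ht))]
      exact Nat.zero_le _
  calc ∑ istar : Fin nI, totalReward nU nI alg istar
      ≤ ∑ istar : Fin nI, (nU - τ istar) := Finset.sum_le_sum (fun i _ => hbound i)
    _ = ∑ istar ∈ S, (nU - τ istar) := by
        symm
        apply Finset.sum_subset (Finset.subset_univ S)
        intro istar _ hnot
        have : ¬∃ t, t < nU ∧ b t = istar := by
          intro hcon; exact hnot (by simp [hS, hcon])
        simp [hτ, this]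
    _ = ∑ t ∈ S.image τ, (nU - t) := by
        symm
        apply Finset.sum_image
        intro x hx y hy hxy
        have hxS : ∃ t, t < nU ∧ b t = x := by simpa [hS] using hx
        have hyS : ∃ t, t < nU ∧ b t = y := by simpa [hS] using hy
        have hτx : τ x = Nat.find hxS := by simp [hτ, hxS]
        have hτy : τ y = Nat.find hyS := by simp [hτ, hyS]
        have hbx : b (τ x) = x := by rw [hτx]; exact (Nat.find_spec hxS).2
        have hby : b (τ y) = y := by rw [hτy]; exact (Nat.find_spec hyS).2
        rw [← hbx, ← hby, hxy]
    _ ≤ ∑ j ∈ Finset.range ((S.image τ).card), (nU - j) :=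
        sum_sub_le _ nU _ rfl
    _ ≤ ∑ j ∈ Finset.range (min nU nI), (nU - j) := by
        apply Finset.sum_le_sum_of_subset
        apply Finset.range_subset_range.mpr
        have hc1 : (S.image τ).card ≤ nI := by
          calc (S.image τ).card ≤ S.card := Finset.card_image_le
            _ ≤ (Finset.univ : Finset (Fin nI)).card :=
                Finset.card_le_card (Finset.subset_univ S)
            _ = nI := by simp
        have hc2 : (S.image τ).card ≤ nU := by
          have hsub : S.image τ ⊆ Finset.range nU := by
            intro t ht
            rw [Finset.mem_image] at ht
            obtain ⟨istar, histar, rfl⟩ := ht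
            have hex : ∃ t, t < nU ∧ b t = istar := by simpa [hS] using histar
            rw [Finset.mem_range]
            have : τ istar = Nat.find hex := by simp [hτ, hex]
            rw [this]
            exact (Nat.find_spec hex).1
          calc (S.image τ).card ≤ (Finset.range nU).card :=
              Finset.card_le_card hsub
            _ = nU := Finset.card_range nU
        omega

lemma value_eq (nU nI : ℕ) (hI : 0 < nI) :
    ((∑ j ∈ Finset.range (min nU nI), (nU - j) : ℕ) : ℝ) / nI =
      ((min nU nI : ℕ) : ℝ) * (2 * nU + 1 - ((min nU nI : ℕ) : ℝ)) / (2 * nI) := by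
  have key : ∀ k : ℕ, k ≤ nU →
      ((∑ j ∈ Finset.range k, (nU - j) : ℕ) : ℝ) =
        (k : ℝ) * (2 * nU + 1 - (k : ℝ)) / 2 := by
    intro k
    induction k with
    | zero => intro _; simp
    | succ k ihk =>
        intro hk
        rw [Finset.sum_range_succ, Nat.cast_add, ihk (by omega),
          Nat.cast_sub (by omega)]
        push_cast
        ring
  rw [key (min nU nI) (Nat.min_le_left nU nI)]
  have : (nI : ℝ) ≠ 0 := Nat.cast_ne_zero.mpr (by omega)
  field_simp

/-- On the complete bipartite graph with `nU` users and `nI` items, with a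
single value-1 item chosen uniformly at random (others value 0), the optimal
deterministic algorithm's expected total reward equals
`min{nU,nI}·(2nU + 1 − min{nU,nI})/(2nI)`: this value is achieved by some
deterministic algorithm and no deterministic algorithm exceeds it. -/
theorem stmt_7 (nU nI : ℕ) (hU : 0 < nU) (hI : 0 < nI) :
    IsGreatest
      {x : ℝ | ∃ alg : List (Fin nI × Bool) → Fin nI,
        x = (∑ istar : Fin nI, (totalReward nU nI alg istar : ℝ)) / nI}
      (((min nU nI : ℕ) : ℝ) * (2 * nU + 1 - ((min nU nI : ℕ) : ℝ)) /
        (2 * nI)) := by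
  constructor
  · -- achieved by greedy
    refine ⟨greedy nI hI, ?_⟩
    rw [← value_eq nU nI hI]
    congr 1
    rw [← Nat.cast_sum]
    congr 1
    symm
    calc ∑ istar : Fin nI, totalReward nU nI (greedy nI hI) istar
        = ∑ istar : Fin nI, (nU - (istar : ℕ)) := by
          apply Finset.sum_congr rfl
          intro i _
          exact greedy_reward nU nI hI i
      _ = ∑ i ∈ Finset.range nI, (nU - i) :=
          Fin.sum_univ_eq_sum_range (fun i => nU - i) nI
      _ = ∑ j ∈ Finset.range (min nU nI), (nU - j) := by
          symm
          apply Finset.sum_subset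
          · exact Finset.range_subset_range.mpr (Nat.min_le_right nU nI)
          · intro i hi hni
            rw [Finset.mem_range] at hi
            rw [Finset.mem_range] at hni
            omega
  · rintro x ⟨alg, rfl⟩
    rw [← value_eq nU nI hI]
    rw [← Nat.cast_sum]
    have hle := upper_bound nU nI alg
    gcongr
end

section
/- The recursion R(n_U, n_I) = n_U/n_I + ((n_I−1)/n_I)·R(n_U−1, n_I−1), for n_U, n_I ≥ 2, with R(n_U, 1) = n_U and R(1, n_I) = 1/n_I, has the unique solution R(n_U, n_I) = m(2n_U + 1 − m)/(2n_I) where m = min{n_U, n_I}. -/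
/-- The recursion `R(nU,nI) = nU/nI + ((nI−1)/nI)·R(nU−1,nI−1)` for
`nU, nI ≥ 2`, with boundary conditions `R(nU,1) = nU` and `R(1,nI) = 1/nI`,
is solved (uniquely) by `R(nU,nI) = m(2nU+1−m)/(2nI)` where `m = min{nU,nI}`. -/
theorem stmt_8 (R : ℕ → ℕ → ℝ)
    (hbase1 : ∀ nI, 1 ≤ nI → R 1 nI = 1 / (nI : ℝ))
    (hbase2 : ∀ nU, 1 ≤ nU → R nU 1 = (nU : ℝ))
    (hrec : ∀ nU nI, 2 ≤ nU → 2 ≤ nI →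
      R nU nI = (nU : ℝ) / nI + (((nI : ℝ) - 1) / nI) * R (nU - 1) (nI - 1)) :
    ∀ nU nI, 1 ≤ nU → 1 ≤ nI →
      R nU nI = ((min nU nI : ℕ) : ℝ) *
        (2 * (nU : ℝ) + 1 - ((min nU nI : ℕ) : ℝ)) / (2 * (nI : ℝ)) := by
  intro nU nI
  induction nI generalizing nU with
  | zero => intro _ h; omega
  | succ n ih =>
    intro hU hI
    rcases Nat.lt_or_ge n 1 with hn | hn
    · -- nI = 1
      interval_cases n
      have hmin : min nU 1 = 1 := by omega
      rw [hmin, hbase2 nU hU]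
      push_cast
      ring
    · rcases Nat.lt_or_ge nU 2 with hu1 | hu2
      · -- nU = 1
        interval_cases nU
        have hmin : min 1 (n+1) = 1 := by omega
        rw [hmin, hbase1 (n+1) hI]
        have : ((n:ℝ)+1) ≠ 0 := by positivity
        push_cast
        field_simp
        norm_num
      · -- nU ≥ 2, nI = n+1 ≥ 2
        have hrec' := hrec nU (n+1) hu2 (by omega)
        have hih := ih (nU - 1) (by omega) (by omega)
        have hminsub : min (nU - 1) n = min nU (n+1) - 1 := by omega
        have hm1 : 1 ≤ min nU (n+1) := by omega
        simp only [Nat.add_sub_cancel] at hrec'; rw [hminsub] at hih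
        rw [hrec', hih]
        have hc1 : ((min nU (n+1) - 1 : ℕ) : ℝ) = ((min nU (n+1) : ℕ) : ℝ) - 1 := by
          push_cast [hm1]; ring
        have hc2 : ((nU - 1 : ℕ) : ℝ) = (nU : ℝ) - 1 := by
          push_cast [show 1 ≤ nU by omega]; ring
        rw [hc1, hc2]
        have hn0 : (n : ℝ) ≠ 0 := by
          exact_mod_cast Nat.one_le_iff_ne_zero.mp hn
        have hn1 : ((n:ℝ) + 1) ≠ 0 := by positivity
        push_cast
        field_simp
        ring
end
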